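/- Under the same small-contribution hypothesis (‖H^j(x)‖ ≤ ε‖x‖ for all x) and assuming each H^j is L-Lipschitz, the difference between the sequential composition (id + H^c)∘⋯∘(id + H^1) and the parallel fusion x ↦ x + Σⱼ H^j(x) is bounded in norm by a term of order ε² (times constants depending on c and L) for every input x with ‖x‖ ≤ 1; specifically, ‖(f^c∘⋯∘f^1)(x) − x − Σⱼ H^j(x)‖ ≤ Σⱼ L·((1+ε)^{j−1} − 1)·‖x‖. -/

import Mathlib

/-- with ‖Hʲ(x)‖ ≤ ε‖x‖ and each Hʲ L-Lipschitz, the difference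
between the sequential composition and the parallel fusion is bounded:
‖(f^c∘⋯∘f^1)(x) − x − Σⱼ Hʲ(x)‖ ≤ Σⱼ L·((1+ε)^{j−1} − 1)·‖x‖ for ‖x‖ ≤ 1. -/
theorem sequential_vs_parallel_bound (d c : ℕ) (ε L : ℝ) (hε : 0 ≤ ε) (hL : 0 ≤ L)
    (H : Fin c → EuclideanSpace ℝ (Fin d) → EuclideanSpace ℝ (Fin d))
    (hH : ∀ j x, ‖H j x‖ ≤ ε * ‖x‖)
    (hLip : ∀ j x y, ‖H j x - H j y‖ ≤ L * ‖x - y‖)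
    (x : EuclideanSpace ℝ (Fin d)) (hx : ‖x‖ ≤ 1) :
    ‖(List.finRange c).foldl (fun y j => y + H j y) x - x - ∑ j : Fin c, H j x‖
      ≤ ∑ j : Fin c, L * ((1 + ε) ^ (j : ℕ) - 1) * ‖x‖ := by
  classical
  set H' : ℕ → EuclideanSpace ℝ (Fin d) → EuclideanSpace ℝ (Fin d) :=
    fun n => if h : n < c then H ⟨n, h⟩ else 0 with hH'def
  have hH'eq : ∀ j : Fin c, H' (j : ℕ) = H j := by
    intro j; simp [hH'def, j.isLt]
  have hH' : ∀ j y, ‖H' j y‖ ≤ ε * ‖y‖ := by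
    intro j y
    by_cases h : j < c
    · simpa [hH'def, h] using hH ⟨j, h⟩ y
    · simp only [hH'def, dif_neg h, Pi.zero_apply, norm_zero]
      positivity
  have hLip' : ∀ j y z, ‖H' j y - H' j z‖ ≤ L * ‖y - z‖ := by
    intro j y z
    by_cases h : j < c
    · simpa [hH'def, h] using hLip ⟨j, h⟩ y z
    · simp only [hH'def, dif_neg h, Pi.zero_apply, sub_zero, norm_zero]
      positivity
  set g : ℕ → EuclideanSpace ℝ (Fin d) :=
    fun n => (List.range n).foldl (fun y j => y + H' j y) x with hgdef
  have hg_succ : ∀ n, g (n + 1) = g n + H' n (g n) := by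
    intro n; simp [hgdef, List.range_succ]
  have aux1 : ∀ n, ‖g n - x‖ ≤ ((1 + ε) ^ n - 1) * ‖x‖ := by
    intro n
    induction n with
    | zero => simp [hgdef]
    | succ n ih =>
      have hgn : ‖g n‖ ≤ (1 + ε) ^ n * ‖x‖ := by
        have h1 : ‖g n‖ ≤ ‖g n - x‖ + ‖x‖ := by
          simpa using norm_add_le (g n - x) x
        nlinarith
      have h2 : ‖H' n (g n)‖ ≤ ε * ((1 + ε) ^ n * ‖x‖) := by
        refine le_trans (hH' n (g n)) ?_
        exact mul_le_mul_of_nonneg_left hgn hε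
      have h3 : ‖g (n + 1) - x‖ ≤ ‖g n - x‖ + ‖H' n (g n)‖ := by
        rw [hg_succ n]
        have heq : g n + H' n (g n) - x = (g n - x) + H' n (g n) := by abel
        rw [heq]; exact norm_add_le _ _
      have hp : (1 + ε) ^ (n + 1) = (1 + ε) ^ n * (1 + ε) := pow_succ _ _
      nlinarith
  have aux2 : ∀ n, ‖g n - x - ∑ j ∈ Finset.range n, H' j x‖
      ≤ ∑ j ∈ Finset.range n, L * ((1 + ε) ^ j - 1) * ‖x‖ := by
    intro n
    induction n with
    | zero => simp [hgdef]
    | succ n ih =>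
      rw [Finset.sum_range_succ, Finset.sum_range_succ, hg_succ n]
      have heq : g n + H' n (g n) - x - (∑ j ∈ Finset.range n, H' j x + H' n x)
          = (g n - x - ∑ j ∈ Finset.range n, H' j x) + (H' n (g n) - H' n x) := by
        abel
      rw [heq]
      refine le_trans (norm_add_le _ _) ?_
      have h4 : ‖H' n (g n) - H' n x‖ ≤ L * (((1 + ε) ^ n - 1) * ‖x‖) :=
        le_trans (hLip' n (g n) x) (mul_le_mul_of_nonneg_left (aux1 n) hL)
      have h5 : L * (((1 + ε) ^ n - 1) * ‖x‖) = L * ((1 + ε) ^ n - 1) * ‖x‖ := by ring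
      linarith
  have hfold : (List.finRange c).foldl (fun y j => y + H j y) x = g c := by
    show _ = List.foldl (fun y j => y + H' j y) x (List.range c)
    have : List.range c = (List.finRange c).map Fin.val := List.ext_getElem (by simp) (by simp)
    rw [this, List.foldl_map]
    congr 1
    funext y j
    rw [hH'eq j]
  have hsum : ∑ j : Fin c, H j x = ∑ j ∈ Finset.range c, H' j x := by
    rw [← Fin.sum_univ_eq_sum_range (fun j => H' j x)]
    exact Finset.sum_congr rfl fun j _ => by rw [hH'eq j]
  have hsum2 : ∑ j : Fin c, L * ((1 + ε) ^ (j : ℕ) - 1) * ‖x‖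
      = ∑ j ∈ Finset.range c, L * ((1 + ε) ^ j - 1) * ‖x‖ :=
    Fin.sum_univ_eq_sum_range (fun j => L * ((1 + ε) ^ j - 1) * ‖x‖) c
  rw [hfold, hsum, hsum2]
  exact aux2 c
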